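/- Let V be a variety of bounded lattices and let W be a variety of lattices. If V ⊄ W and V ⊄ W^d (i.e. some member of V, as a lattice, lies outside W, and some member of V lies outside W^d), then there exist a countable bounded lattice L ∈ V and a finite spanning partial sublattice K of L (with 0_L, 1_L ∈ K) such that K is not a partial sublattice of any lattice belonging to W ∪ W^d. -/

import Mathlib

set_option linter.unusedVariables false

universe u v

/-- A congruence of a lattice: an equivalence relation compatible with `⊔` and `⊓`. -/
structure LatCon (L : Type u) [Lattice L] extends Setoid L where
  sup_comp : ∀ {a b c d : L}, r a b → r c d → r (a ⊔ c) (b ⊔ d)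
  inf_comp : ∀ {a b c d : L}, r a b → r c d → r (a ⊓ c) (b ⊓ d)

namespace LatCon

variable {L : Type u} [Lattice L]

theorem ext' {θ ψ : LatCon L} (h : θ.r = ψ.r) : θ = ψ := by
  obtain ⟨⟨r₁, h₁⟩, _, _⟩ := θ
  obtain ⟨⟨r₂, h₂⟩, _, _⟩ := ψ
  cases h
  rfl

instance : PartialOrder (LatCon L) where
  le θ ψ := ∀ ⦃a b : L⦄, θ.r a b → ψ.r a b
  le_refl θ a b h := h
  le_trans θ₁ θ₂ θ₃ h₁ h₂ a b h := h₂ (h₁ h)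
  le_antisymm θ ψ h₁ h₂ :=
    ext' (funext fun a => funext fun b => propext ⟨fun h => h₁ h, fun h => h₂ h⟩)

instance : InfSet (LatCon L) where
  sInf S :=
    { r := fun a b => ∀ θ ∈ S, θ.r a b
      iseqv := ⟨fun a θ _ => θ.iseqv.refl a,
        fun h θ hθ => θ.iseqv.symm (h θ hθ),
        fun h₁ h₂ θ hθ => θ.iseqv.trans (h₁ θ hθ) (h₂ θ hθ)⟩
      sup_comp := fun h₁ h₂ θ hθ => θ.sup_comp (h₁ θ hθ) (h₂ θ hθ)
      inf_comp := fun h₁ h₂ θ hθ => θ.inf_comp (h₁ θ hθ) (h₂ θ hθ) }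

instance : CompleteLattice (LatCon L) :=
  completeLatticeOfInf _ fun S =>
    ⟨fun θ hθ a b h => h θ hθ, fun ψ hψ a b h θ hθ => hψ hθ h⟩

end LatCon

/-- The principal congruence `Θ_L(x, y)` generated by a pair of elements. -/
def latConPrincipal {L : Type u} [Lattice L] (x y : L) : LatCon L :=
  sInf {θ : LatCon L | θ.r x y}

/-- Compact elements of a complete lattice, with the meaning this name had in Mathlib (Dec 2024). -/
def CompleteLattice.IsCompactElement {α : Type*} [CompleteLattice α] (k : α) :=
  ∀ s : Set α, k ≤ sSup s → ∃ t : Finset α, ↑t ⊆ s ∧ k ≤ t.sup id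

/-- The (∨,0)-semilattice of compact (i.e., finitely generated) congruences of a lattice. -/
abbrev ConC (L : Type u) [Lattice L] : Type u :=
  {θ : LatCon L // CompleteLattice.IsCompactElement θ}

/-- The congruence of `B` generated by the image of a congruence under a lattice
homomorphism `f : A → B`; `Con_c f` is the restriction of this map to compact congruences. -/
def conMap {A : Type u} {B : Type v} [Lattice A] [Lattice B] (f : LatticeHom A B)
    (θ : LatCon A) : LatCon B :=
  sInf {ψ : LatCon B | ∀ a b : A, θ.r a b → ψ.r (f a) (f b)}

/-- The kernel congruence of a lattice homomorphism. -/
def latKer {A : Type u} {B : Type v} [Lattice A] [Lattice B] (f : LatticeHom A B) :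
    LatCon A where
  r a b := f a = f b
  iseqv := ⟨fun _ => rfl, Eq.symm, Eq.trans⟩
  sup_comp := fun h₁ h₂ => by simp only [map_sup]; rw [h₁, h₂]
  inf_comp := fun h₁ h₂ => by simp only [map_inf]; rw [h₁, h₂]

/-- A lattice is simple if it has exactly two congruences. -/
def SimpleLat (L : Type u) [Lattice L] : Prop :=
  ∃ θ ψ : LatCon L, θ ≠ ψ ∧ ∀ χ : LatCon L, χ = θ ∨ χ = ψ

/-- A bundled lattice. -/
structure BLat : Type (u + 1) where
  carrier : Type u
  [str : Lattice carrier]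

attribute [instance] BLat.str

instance : CoeSort BLat.{u} (Type u) := ⟨BLat.carrier⟩

/-- The order-dual of a bundled lattice. -/
def BLat.dual (X : BLat.{u}) : BLat.{u} := ⟨(↥X)ᵒᵈ⟩

/-- A bundled bounded lattice. -/
structure BdLat : Type (u + 1) where
  carrier : Type u
  [str : Lattice carrier]
  [bdd : BoundedOrder carrier]

attribute [instance] BdLat.str BdLat.bdd

instance : CoeSort BdLat.{u} (Type u) := ⟨BdLat.carrier⟩

/-- The underlying (bundled) lattice of a bounded lattice. -/
def BdLat.toBLat (X : BdLat.{u}) : BLat.{u} := ⟨X.carrier⟩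

/-- A class of lattices is a variety if it is closed under homomorphic images,
sublattices and arbitrary direct products. -/
def IsLatVariety (V : BLat.{u} → Prop) : Prop :=
  (∀ (X Y : BLat.{u}) (f : LatticeHom X Y), Function.Surjective f → V X → V Y) ∧
  (∀ (X Y : BLat.{u}) (f : LatticeHom X Y), Function.Injective f → V Y → V X) ∧
  (∀ (ι : Type u) (F : ι → BLat.{u}), (∀ i, V (F i)) → V ⟨∀ i, F i⟩)

/-- A class of bounded lattices is a variety if it is closed under homomorphic images
(under 0,1-lattice homomorphisms), bounded sublattices and arbitrary direct products. -/
def IsBddLatVariety (V : BdLat.{u} → Prop) : Prop :=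
  (∀ (X Y : BdLat.{u}) (f : BoundedLatticeHom X Y), Function.Surjective f → V X → V Y) ∧
  (∀ (X Y : BdLat.{u}) (f : BoundedLatticeHom X Y), Function.Injective f → V Y → V X) ∧
  (∀ (ι : Type u) (F : ι → BdLat.{u}), (∀ i, V (F i)) → V ⟨∀ i, F i⟩)

/-- `VarMem K X` states that `X` belongs to the variety `Var K` generated by `K`,
i.e. to every variety containing `K`. -/
def VarMem (K X : BLat.{u}) : Prop :=
  ∀ V : BLat.{u} → Prop, IsLatVariety V → V K → V X

/-- `Con_c A` and `Con_c B` are isomorphic (∨,0)-semilattices; since finite joins and `0` are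
determined by the order, this is equivalent to the existence of an order isomorphism. -/
def ConcIso (A : BLat.{u}) (B : BLat.{v}) : Prop :=
  Nonempty (ConC ↥A ≃o ConC ↥B)

/-- `K`, viewed as a partial sublattice of `L` (joins and meets of elements of `K` are
defined exactly when they lie in `K`), embeds into the lattice `M`: there is a one-to-one
map preserving all joins and meets that are defined in `K`. -/
def PartialSublatEmbeds {L : Type u} [Lattice L] (K : Set L) (M : Type v) [Lattice M] : Prop :=
  ∃ h : K → M, Function.Injective h ∧
    (∀ (x y : K) (hxy : (x : L) ⊔ (y : L) ∈ K), h ⟨(x : L) ⊔ (y : L), hxy⟩ = h x ⊔ h y) ∧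
    (∀ (x y : K) (hxy : (x : L) ⊓ (y : L) ∈ K), h ⟨(x : L) ⊓ (y : L), hxy⟩ = h x ⊓ h y)

namespace VarAux

open Filter

variable {L : Type u} [Lattice L]

/-- Quotient of a lattice by a congruence. -/
def LatConQuot (θ : LatCon L) : Type u := Quotient θ.toSetoid

instance (θ : LatCon L) : Max (LatConQuot θ) where
  max := Quotient.lift₂ (fun a b => Quotient.mk θ.toSetoid (a ⊔ b))
    (fun _ _ _ _ ha hb => Quotient.sound (θ.sup_comp ha hb))

instance (θ : LatCon L) : Min (LatConQuot θ) where
  min := Quotient.lift₂ (fun a b => Quotient.mk θ.toSetoid (a ⊓ b))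
    (fun _ _ _ _ ha hb => Quotient.sound (θ.inf_comp ha hb))

instance (θ : LatCon L) : Lattice (LatConQuot θ) :=
  Lattice.mk'
    (fun a b => Quotient.inductionOn₂ a b fun x y =>
      congrArg (Quotient.mk θ.toSetoid) (sup_comm x y))
    (fun a b c => Quotient.inductionOn₃ a b c fun x y z =>
      congrArg (Quotient.mk θ.toSetoid) (sup_assoc x y z))
    (fun a b => Quotient.inductionOn₂ a b fun x y =>
      congrArg (Quotient.mk θ.toSetoid) (inf_comm x y))
    (fun a b c => Quotient.inductionOn₃ a b c fun x y z =>
      congrArg (Quotient.mk θ.toSetoid) (inf_assoc x y z))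
    (fun a b => Quotient.inductionOn₂ a b fun x y =>
      congrArg (Quotient.mk θ.toSetoid) (sup_inf_self (a := x) (b := y)))
    (fun a b => Quotient.inductionOn₂ a b fun x y =>
      congrArg (Quotient.mk θ.toSetoid) (inf_sup_self (a := x) (b := y)))

/-- The quotient homomorphism. -/
def latConMkHom (θ : LatCon L) : LatticeHom L (LatConQuot θ) where
  toFun := Quotient.mk θ.toSetoid
  map_sup' _ _ := rfl
  map_inf' _ _ := rfl

lemma latConMkHom_surj (θ : LatCon L) : Function.Surjective (latConMkHom θ) :=
  fun q => ⟨q.out, Quotient.out_eq q⟩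

/-- The ultraproduct congruence on a product of lattices. -/
def ultraCon {ι : Type u} (F : ι → Type v) [∀ i, Lattice (F i)] (U : Ultrafilter ι) :
    LatCon (∀ i, F i) where
  r f g := {i | f i = g i} ∈ (U : Filter ι)
  iseqv := ⟨fun _ => Filter.mem_of_superset Filter.univ_mem fun _ _ => rfl,
    fun h => Filter.mem_of_superset h fun _ hi => hi.symm,
    fun h₁ h₂ => Filter.mem_of_superset (Filter.inter_mem h₁ h₂) fun _ hi => hi.1.trans hi.2⟩
  sup_comp := fun h₁ h₂ => Filter.mem_of_superset (Filter.inter_mem h₁ h₂) fun i hi => by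
    show _ ⊔ _ = _ ⊔ _
    rw [hi.1, hi.2]
  inf_comp := fun h₁ h₂ => Filter.mem_of_superset (Filter.inter_mem h₁ h₂) fun i hi => by
    show _ ⊓ _ = _ ⊓ _
    rw [hi.1, hi.2]

end VarAux

namespace VarAux

/-- The single-index approximation map used in the ultraproduct argument. -/
noncomputable def keyMap {A : Type} [Lattice A] [DecidableEq A] (a₀ : A)
    (D : Finset A → BLat.{0})
    (h : ∀ K : Finset A, (↑(insert a₀ K) : Set A) → ↥(D K)) :
    A → ∀ K : Finset A, ↥(D K) := fun a K =>
  if ha : a ∈ insert a₀ K then h K ⟨a, Finset.mem_coe.2 ha⟩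
  else h K ⟨a₀, Finset.mem_coe.2 (Finset.mem_insert_self a₀ K)⟩

/-- Compactness: if a lattice `A` does not belong to the variety `W`, then some finite
partial sublattice of `A` embeds in no member of `W`. -/
lemma key (W : BLat.{0} → Prop) (hW : IsLatVariety W) (A : Type) [Lattice A]
    (hA : ¬ W ⟨A⟩) :
    ∃ K : Finset A, ∀ M : BLat.{0}, W M → ¬ PartialSublatEmbeds (↑K : Set A) ↥M := by
  by_contra hcon
  push_neg at hcon
  refine hA ?_
  by_cases hne : Nonempty A
  · classical
    obtain ⟨a₀⟩ := hne
    choose M hM e using hcon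
    set D : Finset A → BLat.{0} := fun K => M (insert a₀ K) with hD
    have e' : ∀ K : Finset A, PartialSublatEmbeds (↑(insert a₀ K) : Set A) ↥(D K) :=
      fun K => e (insert a₀ K)
    choose h hinj hsup hinf using e'
    have hP : W ⟨∀ K : Finset A, ↥(D K)⟩ := hW.2.2 (Finset A) D fun K => hM _
    haveI : (Filter.atTop : Filter (Finset A)).NeBot := Filter.atTop_neBot
    set U : Ultrafilter (Finset A) := Ultrafilter.of Filter.atTop with hU
    have hUmem : ∀ F : Finset A, {K | F ≤ K} ∈ (U : Filter (Finset A)) :=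
      fun F => Ultrafilter.of_le _ (Filter.mem_atTop F)
    set θ : LatCon (∀ K : Finset A, ↥(D K)) := ultraCon (fun K => ↥(D K)) U with hθ
    set f : A → ∀ K : Finset A, ↥(D K) := keyMap a₀ D h with hf
    have hfsup : ∀ a b : A, θ.r (f (a ⊔ b)) (f a ⊔ f b) := by
      intro a b
      refine Filter.mem_of_superset (hUmem {a, b, a ⊔ b}) ?_
      intro K hK
      have hsub : ({a, b, a ⊔ b} : Finset A) ⊆ K := hK
      have ha' : a ∈ insert a₀ K := Finset.mem_insert_of_mem (hsub (by simp))
      have hb' : b ∈ insert a₀ K := Finset.mem_insert_of_mem (hsub (by simp))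
      have hab' : a ⊔ b ∈ insert a₀ K := Finset.mem_insert_of_mem (hsub (by simp))
      show f (a ⊔ b) K = f a K ⊔ f b K
      rw [hf]
      simp only [keyMap, dif_pos ha', dif_pos hb', dif_pos hab']
      exact hsup K ⟨a, Finset.mem_coe.2 ha'⟩ ⟨b, Finset.mem_coe.2 hb'⟩
        (Finset.mem_coe.2 hab')
    have hfinf : ∀ a b : A, θ.r (f (a ⊓ b)) (f a ⊓ f b) := by
      intro a b
      refine Filter.mem_of_superset (hUmem {a, b, a ⊓ b}) ?_
      intro K hK
      have hsub : ({a, b, a ⊓ b} : Finset A) ⊆ K := hK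
      have ha' : a ∈ insert a₀ K := Finset.mem_insert_of_mem (hsub (by simp))
      have hb' : b ∈ insert a₀ K := Finset.mem_insert_of_mem (hsub (by simp))
      have hab' : a ⊓ b ∈ insert a₀ K := Finset.mem_insert_of_mem (hsub (by simp))
      show f (a ⊓ b) K = f a K ⊓ f b K
      rw [hf]
      simp only [keyMap, dif_pos ha', dif_pos hb', dif_pos hab']
      exact hinf K ⟨a, Finset.mem_coe.2 ha'⟩ ⟨b, Finset.mem_coe.2 hb'⟩
        (Finset.mem_coe.2 hab')
    set φ : LatticeHom A (LatConQuot θ) :=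
      { toFun := fun a => Quotient.mk θ.toSetoid (f a)
        map_sup' := fun a b => Quotient.sound (hfsup a b)
        map_inf' := fun a b => Quotient.sound (hfinf a b) } with hφ
    have hφinj : Function.Injective φ := by
      intro a b hab
      have h1 : {K | f a K = f b K} ∈ (U : Filter (Finset A)) := Quotient.exact hab
      have h2 := hUmem {a, b}
      obtain ⟨K, hK1, hK2⟩ := Filter.nonempty_of_mem (Filter.inter_mem h1 h2)
      have hsub : ({a, b} : Finset A) ⊆ K := hK2
      have ha' : a ∈ insert a₀ K := Finset.mem_insert_of_mem (hsub (by simp))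
      have hb' : b ∈ insert a₀ K := Finset.mem_insert_of_mem (hsub (by simp))
      have hK1' : f a K = f b K := hK1
      rw [hf] at hK1'
      simp only [keyMap, dif_pos ha', dif_pos hb'] at hK1'
      have := hinj K hK1'
      exact congrArg Subtype.val this
    have hQ : W ⟨LatConQuot θ⟩ :=
      hW.1 ⟨∀ K : Finset A, ↥(D K)⟩ ⟨LatConQuot θ⟩ (latConMkHom θ) (latConMkHom_surj θ) hP
    exact hW.2.1 ⟨A⟩ ⟨LatConQuot θ⟩ φ hφinj hQ
  · set F : PEmpty.{1} → BLat.{0} := fun i => i.elim with hF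
    have hsing : W ⟨∀ i, ↥(F i)⟩ := hW.2.2 PEmpty.{1} F fun i => i.elim
    refine hW.2.1 ⟨A⟩ ⟨∀ i, ↥(F i)⟩
      ⟨⟨fun _ i => i.elim, fun _ _ => funext fun i => i.elim⟩,
        fun _ _ => funext fun i => i.elim⟩
      (fun a _ _ => absurd ⟨a⟩ hne) hsing

end VarAux

namespace VarAux

/-- Transfer: a partial-lattice embedding of `K` into `K'` pulls back embeddability. -/
lemma embedsOfMap {L : Type u} {L' : Type v} {M : Type w} [Lattice L] [Lattice L'] [Lattice M]
    {K : Set L} {K' : Set L'} (f : K → L') (hf : Function.Injective f)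
    (hmem : ∀ x, f x ∈ K')
    (hsup : ∀ (x y : K) (hxy : (x : L) ⊔ (y : L) ∈ K), f ⟨(x : L) ⊔ (y : L), hxy⟩ = f x ⊔ f y)
    (hinf : ∀ (x y : K) (hxy : (x : L) ⊓ (y : L) ∈ K), f ⟨(x : L) ⊓ (y : L), hxy⟩ = f x ⊓ f y)
    (h : PartialSublatEmbeds K' M) : PartialSublatEmbeds K M := by
  obtain ⟨g, hg, hgsup, hginf⟩ := h
  refine ⟨fun x => g ⟨f x, hmem x⟩, ?_, ?_, ?_⟩
  · intro x y hxy
    exact hf (Subtype.ext_iff.1 (hg hxy))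
  · intro x y hxy
    have h1 : (f x : L') ⊔ (f y : L') ∈ K' := by rw [← hsup x y hxy]; exact hmem _
    have h2 := hgsup ⟨f x, hmem x⟩ ⟨f y, hmem y⟩ h1
    rw [← h2]
    exact congrArg g (Subtype.ext (hsup x y hxy))
  · intro x y hxy
    have h1 : (f x : L') ⊓ (f y : L') ∈ K' := by rw [← hinf x y hxy]; exact hmem _
    have h2 := hginf ⟨f x, hmem x⟩ ⟨f y, hmem y⟩ h1
    rw [← h2]
    exact congrArg g (Subtype.ext (hinf x y hxy))

/-- Dual transfer: an order-reversing partial-lattice embedding of `K` into `K'` pulls back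
embeddability into the dual. -/
lemma embedsOfMapDual {L : Type u} {L' : Type v} {M : Type w} [Lattice L] [Lattice L'] [Lattice M]
    {K : Set L} {K' : Set L'} (f : K → L') (hf : Function.Injective f)
    (hmem : ∀ x, f x ∈ K')
    (hsup : ∀ (x y : K) (hxy : (x : L) ⊔ (y : L) ∈ K), f ⟨(x : L) ⊔ (y : L), hxy⟩ = f x ⊓ f y)
    (hinf : ∀ (x y : K) (hxy : (x : L) ⊓ (y : L) ∈ K), f ⟨(x : L) ⊓ (y : L), hxy⟩ = f x ⊔ f y)
    (h : PartialSublatEmbeds K' M) : PartialSublatEmbeds K Mᵒᵈ := by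
  obtain ⟨g, hg, hgsup, hginf⟩ := h
  refine ⟨fun x => OrderDual.toDual (g ⟨f x, hmem x⟩), ?_, ?_, ?_⟩
  · intro x y hxy
    exact hf (Subtype.ext_iff.1 (hg (OrderDual.toDual.injective hxy)))
  · intro x y hxy
    show OrderDual.toDual (g ⟨f ⟨(x : L) ⊔ (y : L), hxy⟩, hmem _⟩) =
      OrderDual.toDual (g ⟨f x, hmem x⟩ ⊓ g ⟨f y, hmem y⟩)
    refine congrArg OrderDual.toDual ?_
    have h1 : (f x : L') ⊓ (f y : L') ∈ K' := by rw [← hsup x y hxy]; exact hmem _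
    have h2 := hginf ⟨f x, hmem x⟩ ⟨f y, hmem y⟩ h1
    rw [← h2]
    exact congrArg g (Subtype.ext (hsup x y hxy))
  · intro x y hxy
    show OrderDual.toDual (g ⟨f ⟨(x : L) ⊓ (y : L), hxy⟩, hmem _⟩) =
      OrderDual.toDual (g ⟨f x, hmem x⟩ ⊔ g ⟨f y, hmem y⟩)
    refine congrArg OrderDual.toDual ?_
    have h1 : (f x : L') ⊔ (f y : L') ∈ K' := by rw [← hinf x y hxy]; exact hmem _
    have h2 := hgsup ⟨f x, hmem x⟩ ⟨f y, hmem y⟩ h1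
    rw [← h2]
    exact congrArg g (Subtype.ext (hinf x y hxy))

section Gen

variable {C : Type u} [Lattice C]

/-- Iterated one-step closure of a set under `⊔` and `⊓`. -/
def genStep (K : Set C) : ℕ → Set C
  | 0 => K
  | n + 1 => genStep K n ∪ Set.image2 (· ⊔ ·) (genStep K n) (genStep K n)
      ∪ Set.image2 (· ⊓ ·) (genStep K n) (genStep K n)

lemma genStep_subset_succ (K : Set C) (n : ℕ) : genStep K n ⊆ genStep K (n + 1) :=
  fun _ hx => Or.inl (Or.inl hx)

lemma genStep_mono (K : Set C) {m n : ℕ} (h : m ≤ n) : genStep K m ⊆ genStep K n := by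
  induction h with
  | refl => exact fun _ hx => hx
  | step _ ih => exact fun x hx => genStep_subset_succ K _ (ih hx)

lemma genStep_finite {K : Set C} (hK : K.Finite) : ∀ n, (genStep K n).Finite := by
  intro n
  induction n with
  | zero => exact hK
  | succ n ih => exact ((ih.union (Set.Finite.image2 _ ih ih)).union (Set.Finite.image2 _ ih ih))

/-- The sublattice generated by `K`. -/
def genSet (K : Set C) : Set C := ⋃ n, genStep K n

lemma subset_genSet (K : Set C) : K ⊆ genSet K := fun x hx => Set.mem_iUnion.2 ⟨0, hx⟩

lemma genSet_countable {K : Set C} (hK : K.Finite) : (genSet K).Countable :=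
  Set.countable_iUnion fun n => (genStep_finite hK n).countable

lemma genSet_supClosed (K : Set C) : SupClosed (genSet K) := by
  intro a ha b hb
  obtain ⟨m, hm⟩ := Set.mem_iUnion.1 ha
  obtain ⟨n, hn⟩ := Set.mem_iUnion.1 hb
  refine Set.mem_iUnion.2 ⟨max m n + 1, ?_⟩
  exact Or.inl (Or.inr (Set.mem_image2_of_mem
    (genStep_mono K (le_max_left m n) hm) (genStep_mono K (le_max_right m n) hn)))

lemma genSet_infClosed (K : Set C) : InfClosed (genSet K) := by
  intro a ha b hb
  obtain ⟨m, hm⟩ := Set.mem_iUnion.1 ha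
  obtain ⟨n, hn⟩ := Set.mem_iUnion.1 hb
  refine Set.mem_iUnion.2 ⟨max m n + 1, ?_⟩
  exact Or.inr (Set.mem_image2_of_mem
    (genStep_mono K (le_max_left m n) hm) (genStep_mono K (le_max_right m n) hn))

/-- The sublattice generated by `K`, bundled. -/
def genSub (K : Set C) : Sublattice C := ⟨genSet K, genSet_supClosed K, genSet_infClosed K⟩

end Gen

end VarAux


open VarAux

/-- Let `V` be a variety of bounded lattices and `W` a variety of lattices. If `V ⊄ W` and
`V ⊄ Wᵈ`, then there are a countable bounded lattice `L ∈ V` and a finite spanning partial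
sublattice `K` of `L` that is not a partial sublattice of any member of `W ∪ Wᵈ`. -/
theorem exists_partial_sublattice_not_embeddable
    (V : BdLat.{0} → Prop) (W : BLat.{0} → Prop)
    (hV : IsBddLatVariety V) (hW : IsLatVariety W)
    (hVW : ∃ A : BdLat.{0}, V A ∧ ¬ W A.toBLat)
    (hVWd : ∃ A : BdLat.{0}, V A ∧ ¬ W A.toBLat.dual) :
    ∃ L : BdLat.{0}, V L ∧ Countable ↥L ∧
      ∃ K : Set ↥L, K.Finite ∧ (⊥ : ↥L) ∈ K ∧ (⊤ : ↥L) ∈ K ∧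
        ∀ M : BLat.{0}, W M ∨ W M.dual → ¬ PartialSublatEmbeds K ↥M := by
  classical
  obtain ⟨Ab, hAV, hAW⟩ := hVW
  obtain ⟨Bb, hBV, hBW⟩ := hVWd
  obtain ⟨K₁, hK₁⟩ := key W hW ↥Ab (show ¬ W ⟨↥Ab⟩ from hAW)
  obtain ⟨K₂, hK₂⟩ := key W hW ((↥Bb)ᵒᵈ) (show ¬ W ⟨(↥Bb)ᵒᵈ⟩ from hBW)
  -- the big partial sublattice inside the product
  set Kbig : Set (↥Ab × ↥Bb) :=
    ((fun x : ↥Ab => (x, (⊥ : ↥Bb))) '' ↑K₁ ∪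
      (fun y : (↥Bb)ᵒᵈ => ((⊤ : ↥Ab), OrderDual.ofDual y)) '' ↑K₂) ∪
      {(⊥ : ↥Ab × ↥Bb), ⊤} with hKbig
  have hKbigfin : Kbig.Finite :=
    (((K₁.finite_toSet.image _).union (K₂.finite_toSet.image _)).union
      ((Set.finite_singleton _).insert _))
  have hbotK : (⊥ : ↥Ab × ↥Bb) ∈ Kbig := Or.inr (Or.inl rfl)
  have htopK : (⊤ : ↥Ab × ↥Bb) ∈ Kbig := Or.inr (Or.inr rfl)
  -- Kbig embeds into no member of W ∪ Wᵈ
  have hKbigemb : ∀ M : BLat.{0}, W M ∨ W M.dual → ¬ PartialSublatEmbeds Kbig ↥M := by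
    rintro M (hM | hM) hemb
    · refine hK₁ M hM ?_
      refine embedsOfMap (fun x => ((x : ↥Ab), (⊥ : ↥Bb))) ?_ ?_ ?_ ?_ hemb
      · intro x y h
        exact Subtype.ext (congrArg Prod.fst h)
      · intro x
        exact Or.inl (Or.inl ⟨(x : ↥Ab), x.2, rfl⟩)
      · intro x y hxy
        show ((x : ↥Ab) ⊔ (y : ↥Ab), (⊥ : ↥Bb)) = ((x : ↥Ab) ⊔ y, ⊥ ⊔ ⊥)
        simp
      · intro x y hxy
        show ((x : ↥Ab) ⊓ (y : ↥Ab), (⊥ : ↥Bb)) = ((x : ↥Ab) ⊓ y, ⊥ ⊓ ⊥)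
        simp
    · refine hK₂ M.dual hM ?_
      show PartialSublatEmbeds (↑K₂ : Set ((↥Bb)ᵒᵈ)) ((↥M)ᵒᵈ)
      refine embedsOfMapDual
        (fun y => ((⊤ : ↥Ab), OrderDual.ofDual (y : (↥Bb)ᵒᵈ))) ?_ ?_ ?_ ?_ hemb
      · intro x y h
        exact Subtype.ext (OrderDual.ofDual.injective (congrArg Prod.snd h))
      · intro x
        exact Or.inl (Or.inr ⟨(x : (↥Bb)ᵒᵈ), x.2, rfl⟩)
      · intro x y hxy
        show ((⊤ : ↥Ab), OrderDual.ofDual ((x : (↥Bb)ᵒᵈ) ⊔ y)) = (⊤ ⊓ ⊤, _ ⊓ _)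
        simp
      · intro x y hxy
        show ((⊤ : ↥Ab), OrderDual.ofDual ((x : (↥Bb)ᵒᵈ) ⊓ y)) = (⊤ ⊔ ⊤, _ ⊔ _)
        simp
  -- countable generated sublattice
  set TT : Sublattice (↥Ab × ↥Bb) := genSub Kbig with hTT
  have hKT : Kbig ⊆ genSet Kbig := subset_genSet Kbig
  letI instBO : BoundedOrder ↥TT :=
    { top := ⟨⊤, hKT htopK⟩
      le_top := fun x => show (↑x : ↥Ab × ↥Bb) ≤ ⊤ from le_top
      bot := ⟨⊥, hKT hbotK⟩
      bot_le := fun x => show (⊥ : ↥Ab × ↥Bb) ≤ ↑x from bot_le }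
  -- V contains the product of Ab and Bb
  have hVP : V ⟨↥Ab × ↥Bb⟩ := by
    set F : Bool → BdLat.{0} := fun b => bif b then Ab else Bb with hF
    have h1 : V ⟨∀ b, ↥(F b)⟩ := hV.2.2 Bool F (by intro b; cases b; exacts [hBV, hAV])
    refine hV.1 ⟨∀ b, ↥(F b)⟩ ⟨↥Ab × ↥Bb⟩
      ⟨⟨⟨fun p => (p true, p false), fun p q => rfl⟩, fun p q => rfl⟩, rfl, rfl⟩ ?_ h1
    rintro ⟨x, y⟩
    exact ⟨fun b => Bool.rec (motive := fun b => ↥(F b)) y x b, rfl⟩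
  have hVL : V ⟨↥TT⟩ :=
    hV.2.1 ⟨↥TT⟩ ⟨↥Ab × ↥Bb⟩
      { toFun := Subtype.val
        map_sup' := fun a b => rfl
        map_inf' := fun a b => rfl
        map_top' := rfl
        map_bot' := rfl }
      (fun a b h => Subtype.ext (by exact h)) hVP
  refine ⟨⟨↥TT⟩, hVL, (genSet_countable hKbigfin).to_subtype,
    (Subtype.val ⁻¹' Kbig : Set ↥TT), ?_, hbotK, htopK, ?_⟩
  · exact Set.Finite.preimage (Set.injOn_of_injective Subtype.coe_injective) hKbigfin
  · intro M hM hemb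
    refine hKbigemb M hM ?_
    refine embedsOfMap (fun x : Kbig => (⟨(x : ↥Ab × ↥Bb), hKT x.2⟩ : ↥TT))
      ?_ (fun x => x.2) ?_ ?_ hemb
    · intro x y h
      apply Subtype.ext
      exact congrArg (Subtype.val : ↥TT → ↥Ab × ↥Bb) h
    · intro x y hxy
      exact Subtype.ext rfl
    · intro x y hxy
      exact Subtype.ext rfl
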